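/- Let d ≥ 1 and let E be a channel on M_d. Then E is probabilistically correctable for ℂ^d if and only if E is perfectly correctable for ℂ^d; that is, ξ(d,d) = ξ₁(d,d). -/

import Mathlib

open Matrix Kronecker BigOperators
open scoped ComplexOrder

noncomputable section

/-- `Mat n` is the space of `n × n` complex matrices. -/
abbrev Mat (n : ℕ) := Matrix (Fin n) (Fin n) ℂ

/-- A subchannel from `M_n` to `M_m`: a map of Kraus form whose Kraus operators satisfy
`∑ Kᴴ K ≤ 1` in the Loewner order. -/
def IsSubchannel {n m : Type} [Fintype n] [DecidableEq n] [Fintype m]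
    (Φ : Matrix n n ℂ → Matrix m m ℂ) : Prop :=
  ∃ (k : ℕ) (K : Fin k → Matrix m n ℂ),
    (∀ X, Φ X = ∑ i, K i * X * (K i)ᴴ) ∧ (1 - ∑ i, (K i)ᴴ * K i).PosSemidef

/-- A channel from `M_n` to `M_m`: a map of Kraus form with `∑ Kᴴ K = 1`. -/
def IsChannel {n m : Type} [Fintype n] [DecidableEq n] [Fintype m]
    (Φ : Matrix n n ℂ → Matrix m m ℂ) : Prop :=
  ∃ (k : ℕ) (K : Fin k → Matrix m n ℂ),
    (∀ X, Φ X = ∑ i, K i * X * (K i)ᴴ) ∧ (∑ i, (K i)ᴴ * K i) = 1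

/-- `E` is probabilistically correctable for `ℂ^d`. -/
def ProbCorrectable (d : ℕ) {s : ℕ} (E : Mat s → Mat s) : Prop :=
  ∃ (S : Mat d → Mat s) (R : Mat s → Mat d) (p : ℝ),
    IsSubchannel S ∧ IsSubchannel R ∧ 0 < p ∧ ∀ X, R (E (S X)) = (p : ℂ) • X

/-- `E` is perfectly correctable for `ℂ^d`. -/
def PerfCorrectable (d : ℕ) {s : ℕ} (E : Mat s → Mat s) : Prop :=
  ∃ (S : Mat d → Mat s) (R : Mat s → Mat d),
    IsSubchannel S ∧ IsSubchannel R ∧ ∀ X, R (E (S X)) = X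

/-- The Choi matrix of a map on `M_s`. -/
def choi {s : ℕ} (Φ : Mat s → Mat s) : Matrix (Fin s × Fin s) (Fin s × Fin s) ℂ :=
  ∑ i : Fin s, ∑ j : Fin s, (Φ (single i j 1)) ⊗ₖ (single i j 1)

/-- `rP d s`: the largest `r` such that every channel on `M_s` with Choi rank at most `r`
is probabilistically correctable for `ℂ^d`. -/
def rP (d s : ℕ) : ℕ :=
  sSup {r : ℕ | ∀ E : Mat s → Mat s, IsChannel E → (choi E).rank ≤ r → ProbCorrectable d E}

/-- `rP1 d s`: the largest `r` such that every channel on `M_s` with Choi rank at most `r`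
is perfectly correctable for `ℂ^d`. -/
def rP1 (d s : ℕ) : ℕ :=
  sSup {r : ℕ | ∀ E : Mat s → Mat s, IsChannel E → (choi E).rank ≤ r → PerfCorrectable d E}

section AuxLemmas

lemma mul_std_mul {d : ℕ} (M N : Mat d) (a a' b b' : Fin d) :
    (M * single a a' (1:ℂ) * N) b b' = M b a * N a' b' := by
  simp [Matrix.mul_apply, Matrix.single, ite_and, Finset.sum_ite_eq,
    Finset.mul_sum, Finset.sum_comm (γ := Fin d)]

lemma sum_mul_conj_eq_zero {ι : Type} [Fintype ι] (z : ι → ℂ)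
    (h : ∑ t, z t * (starRingEnd ℂ) (z t) = 0) : ∀ t, z t = 0 := by
  have h2 : ∑ t, (Complex.normSq (z t) : ℂ) = 0 := by
    simpa [Complex.mul_conj] using h
  have h3 : (↑(∑ t, Complex.normSq (z t)) : ℂ) = 0 := by push_cast; exact h2
  rw [Complex.ofReal_eq_zero] at h3
  have h4 := (Finset.sum_eq_zero_iff_of_nonneg (fun t _ => Complex.normSq_nonneg (z t))).mp h3
  intro t
  exact Complex.normSq_eq_zero.mp (h4 t (Finset.mem_univ t))

lemma scalar_of_kraus_id {d : ℕ} (hd : 1 ≤ d) {ι : Type} [Fintype ι] (A : ι → Mat d) (p : ℂ)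
    (h : ∀ X : Mat d, ∑ t, A t * X * (A t)ᴴ = p • X) :
    ∀ t, A t = (A t ⟨0, hd⟩ ⟨0, hd⟩) • (1 : Mat d) := by
  have hent : ∀ (a a' b b' : Fin d),
      ∑ t, A t b a * (starRingEnd ℂ) (A t b' a') = p * (single a a' (1:ℂ)) b b' := by
    intro a a' b b'
    have := congrFun (congrFun (h (single a a' 1)) b) b'
    simpa [Matrix.sum_apply, mul_std_mul, Matrix.conjTranspose_apply] using this
  have hoff : ∀ t (a b : Fin d), b ≠ a → A t b a = 0 := by
    intro t a b hba
    have h0 : (single a a (1:ℂ)) b b = 0 := by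
      simp [Matrix.single, Ne.symm hba]
    have := hent a a b b
    rw [h0, mul_zero] at this
    exact sum_mul_conj_eq_zero _ this t
  have hfact : ∀ (a b : Fin d), ∑ t, A t a a * (starRingEnd ℂ) (A t b b) = p := by
    intro a b
    have := hent a b a b
    simpa using this
  have hdiag : ∀ t (a b : Fin d), A t a a = A t b b := by
    intro t a b
    have hz : ∑ t, (A t a a - A t b b) * (starRingEnd ℂ) (A t a a - A t b b) = 0 := by
      have e1 := hfact a a; have e2 := hfact a b; have e3 := hfact b a; have e4 := hfact b b
      simp only [map_sub, sub_mul, mul_sub, Finset.sum_sub_distrib]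
      rw [e1, e2, e3, e4]; ring
    have := sum_mul_conj_eq_zero _ hz t
    linear_combination this
  intro t
  ext i j
  by_cases hij : i = j
  · subst hij
    simp [hdiag t i ⟨0, hd⟩]
  · simp [hoff t j i hij, Matrix.one_apply_ne hij, hij]

end AuxLemmas

/-- Proposition 3 (D): for `s = d`, probabilistic and perfect correctability coincide. -/
theorem stmt_7 (d : ℕ) (hd : 1 ≤ d) (E : Mat d → Mat d) (hE : IsChannel E) :
    ProbCorrectable d E ↔ PerfCorrectable d E := by
  constructor
  · rintro ⟨S, R, p, ⟨kS, Sk, hSk, -⟩, ⟨kR, Rk, hRk, -⟩, hp, hcor⟩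
    obtain ⟨kE, Ek, hEk, hEsum⟩ := hE
    set x0 : Fin d := ⟨0, hd⟩ with hx0
    set A : (Fin kR × Fin kE × Fin kS) → Mat d :=
      fun t => Rk t.1 * Ek t.2.1 * Sk t.2.2 with hA
    have hcomp : ∀ X : Mat d, ∑ t, A t * X * (A t)ᴴ = (p : ℂ) • X := by
      intro X
      rw [← hcor X, hSk, hEk, hRk]
      rw [Fintype.sum_prod_type]
      refine Finset.sum_congr rfl fun i _ => ?_
      rw [Fintype.sum_prod_type]
      simp only [Finset.mul_sum, Finset.sum_mul]
      refine Finset.sum_congr rfl fun k _ => ?_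
      refine Finset.sum_congr rfl fun j _ => ?_
      simp only [hA, Matrix.conjTranspose_mul, Matrix.mul_assoc]
    have hscal := scalar_of_kraus_id hd A (p : ℂ) hcomp
    set c : (Fin kR × Fin kE × Fin kS) → ℂ := fun t => A t x0 x0 with hc
    have hex : ∃ t, c t ≠ 0 := by
      by_contra hcon
      push_neg at hcon
      have h0 : ∑ t, A t * (1 : Mat d) * (A t)ᴴ = 0 := by
        refine Finset.sum_eq_zero fun t _ => ?_
        rw [hscal t]
        rw [show A t x0 x0 = c t from rfl, hcon t]
        simp
      rw [hcomp 1] at h0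
      have h1 := congrFun (congrFun h0 x0) x0
      simp [Matrix.one_apply] at h1
      exact absurd h1 (by exact_mod_cast hp.ne')
    obtain ⟨⟨i0, k0, j0⟩, hc0⟩ := hex
    have hA0 : Rk i0 * Ek k0 * Sk j0 = c (i0, k0, j0) • 1 := hscal (i0, k0, j0)
    have hdet : (Rk i0).det * (Ek k0).det * (Sk j0).det = (c (i0, k0, j0)) ^ d := by
      rw [← Matrix.det_mul, ← Matrix.det_mul, hA0]
      simp [Matrix.det_smul]
    have hdet_ne : (Rk i0).det * (Ek k0).det * (Sk j0).det ≠ 0 := by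
      rw [hdet]; exact pow_ne_zero _ hc0
    have hRdet : IsUnit (Rk i0).det := by
      refine isUnit_iff_ne_zero.mpr fun h => hdet_ne ?_
      rw [h]; ring
    have hSdet : IsUnit (Sk j0).det := by
      refine isUnit_iff_ne_zero.mpr fun h => hdet_ne ?_
      rw [h]; ring
    set U : Mat d := (Rk i0)⁻¹ * (Sk j0)⁻¹ with hU
    set γ : Fin kE → ℂ := fun k => c (i0, k, j0) with hγ
    have hEkU : ∀ k, Ek k = γ k • U := by
      intro k
      have h1 : Rk i0 * Ek k * Sk j0 = γ k • 1 := hscal (i0, k, j0)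
      have h2 : (Rk i0)⁻¹ * (Rk i0 * Ek k * Sk j0) * (Sk j0)⁻¹ = Ek k := by
        rw [Matrix.mul_assoc (Rk i0) (Ek k) (Sk j0),
          Matrix.nonsing_inv_mul_cancel_left _ _ hRdet,
          Matrix.mul_nonsing_inv_cancel_right _ _ hSdet]
      rw [← h2, h1, Matrix.mul_smul, Matrix.mul_one, Matrix.smul_mul]
    set q : ℝ := ∑ k, Complex.normSq (γ k) with hq
    have hstar : ∀ k, star (γ k) * γ k = (Complex.normSq (γ k) : ℂ) := by
      intro k
      rw [Complex.star_def, ← Complex.normSq_eq_conj_mul_self]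
    have hqU : (q : ℂ) • ((U)ᴴ * U) = 1 := by
      rw [← hEsum]
      rw [Finset.sum_congr rfl fun k _ => by
        rw [hEkU k, Matrix.conjTranspose_smul, Matrix.smul_mul, Matrix.mul_smul,
          smul_smul, hstar k]]
      rw [← Finset.sum_smul]
      congr 1
      rw [hq]
      push_cast
      rfl
    have hq_nonneg : 0 ≤ q := Finset.sum_nonneg fun k _ => Complex.normSq_nonneg _
    have hq_pos : 0 < q := by
      rcases lt_or_eq_of_le hq_nonneg with h | h
      · exact h
      · exfalso
        rw [← h] at hqU
        simp only [Complex.ofReal_zero, zero_smul] at hqU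
        have h1 := congrFun (congrFun hqU x0) x0
        simp [Matrix.one_apply] at h1
    set V : Mat d := (Real.sqrt q : ℂ) • U with hV
    have hsq : star ((Real.sqrt q : ℂ)) * (Real.sqrt q : ℂ) = (q : ℂ) := by
      rw [Complex.star_def, Complex.conj_ofReal, ← Complex.ofReal_mul,
        Real.mul_self_sqrt hq_nonneg]
    have hVV : Vᴴ * V = 1 := by
      rw [hV, Matrix.conjTranspose_smul, Matrix.smul_mul, Matrix.mul_smul, smul_smul,
        hsq]
      exact hqU
    have hVVt : V * Vᴴ = 1 := mul_eq_one_comm.mp hVV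
    have hEV : ∀ X, E X = V * X * Vᴴ := by
      intro X
      rw [hEk]
      rw [Finset.sum_congr rfl fun k _ => by
        rw [hEkU k, Matrix.conjTranspose_smul, Matrix.smul_mul, Matrix.smul_mul,
          Matrix.mul_smul, smul_smul]]
      rw [← Finset.sum_smul]
      rw [hV, Matrix.conjTranspose_smul, Matrix.smul_mul, Matrix.smul_mul,
        Matrix.mul_smul, smul_smul]
      congr 1
      rw [mul_comm]
      rw [hsq]
      rw [hq]
      push_cast
      refine Finset.sum_congr rfl fun k _ => ?_
      rw [mul_comm, hstar k]
    refine ⟨fun X => X, fun X => Vᴴ * X * V, ?_, ?_, ?_⟩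
    · refine ⟨1, fun _ => 1, fun X => by simp, ?_⟩
      rw [show (1 - ∑ _i : Fin 1, ((1 : Mat d))ᴴ * 1) = 0 by simp]
      exact Matrix.PosSemidef.zero
    · refine ⟨1, fun _ => Vᴴ, fun X => by simp, ?_⟩
      rw [show (1 - ∑ _i : Fin 1, ((Vᴴ))ᴴ * Vᴴ) = 0 by simp [hVVt]]
      exact Matrix.PosSemidef.zero
    · intro X
      rw [hEV X]
      calc Vᴴ * (V * X * Vᴴ) * V = (Vᴴ * V) * X * (Vᴴ * V) := by
            simp only [Matrix.mul_assoc]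
          _ = X := by rw [hVV]; simp
  · rintro ⟨S, R, hS, hR, hcor⟩
    exact ⟨S, R, 1, hS, hR, one_pos, fun X => by simpa using hcor X⟩
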